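/- arXiv:2503.15933 — 6 statements merged into one kernel-verified Lean document; each statement's English description precedes it below -/
import Mathlib

section
/- Let γ be a closed convex cone in ℝ^n with nonempty interior, and let γ̊ denote its interior. Then the family of sets {γ̊ − a : a ∈ ℝ^n} forms a basis of the γ-topology: each γ̊ − a is γ-open, and for every γ-open set U and every x ∈ U there exists a ∈ ℝ^n with x ∈ γ̊ − a ⊆ U. -/
open Pointwise

/-- For a closed convex cone `γ ⊆ ℝⁿ` with nonempty interior, the translates
`γ̊ - a = {x | x + a ∈ interior γ}` of the interior form a basis of the γ-topology:
each is γ-open, and every γ-open set is a union of such sets. -/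
theorem gammaInterior_translates_basis {n : ℕ} (γ : Set (EuclideanSpace ℝ (Fin n)))
    (hclosed : IsClosed γ)
    (hadd : ∀ x ∈ γ, ∀ y ∈ γ, x + y ∈ γ)
    (hsmul : ∀ c : ℝ, 0 < c → ∀ x ∈ γ, c • x ∈ γ)
    (hint : (interior γ).Nonempty) :
    (∀ a : EuclideanSpace ℝ (Fin n),
        IsOpen {x : EuclideanSpace ℝ (Fin n) | x + a ∈ interior γ} ∧
        {x : EuclideanSpace ℝ (Fin n) | x + a ∈ interior γ} + γ =
          {x : EuclideanSpace ℝ (Fin n) | x + a ∈ interior γ}) ∧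
    (∀ U : Set (EuclideanSpace ℝ (Fin n)), IsOpen U → U + γ = U →
        ∀ x ∈ U, ∃ a : EuclideanSpace ℝ (Fin n),
          x ∈ {y : EuclideanSpace ℝ (Fin n) | y + a ∈ interior γ} ∧
          {y : EuclideanSpace ℝ (Fin n) | y + a ∈ interior γ} ⊆ U) := by
  -- interior γ is stable under adding elements of γ
  have hintadd : ∀ z ∈ interior γ, ∀ g ∈ γ, z + g ∈ interior γ := by
    intro z hz g hg
    have hopen : IsOpen ((· + g) '' interior γ) :=
      (isOpenMap_add_right g) _ isOpen_interior
    have hsub : (· + g) '' interior γ ⊆ γ := by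
      rintro _ ⟨w, hw, rfl⟩
      exact hadd w (interior_subset hw) g hg
    exact interior_maximal hsub hopen ⟨z, hz, rfl⟩
  -- interior γ is stable under positive scaling
  have hintsmul : ∀ c : ℝ, 0 < c → ∀ z ∈ interior γ, c • z ∈ interior γ := by
    intro c hc z hz
    have hopen : IsOpen (c • interior γ) :=
      isOpen_interior.smul₀ (ne_of_gt hc)
    have hsub : c • interior γ ⊆ γ := by
      rintro _ ⟨w, hw, rfl⟩
      exact hsmul c hc w (interior_subset hw)
    exact interior_maximal hsub hopen ⟨z, hz, rfl⟩
  -- 0 ∈ γ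
  obtain ⟨e, he⟩ := hint
  have h0 : (0 : EuclideanSpace ℝ (Fin n)) ∈ γ := by
    have htend : Filter.Tendsto (fun k : ℕ => (1 / (k + 1) : ℝ) • e)
        Filter.atTop (nhds 0) := by
      have := (tendsto_one_div_add_atTop_nhds_zero_nat :
        Filter.Tendsto (fun k : ℕ => 1 / ((k : ℝ) + 1)) Filter.atTop (nhds 0)).smul_const e
      simpa using this
    refine hclosed.mem_of_tendsto htend ?_
    filter_upwards with k
    exact hsmul _ (by positivity) e (interior_subset he)
  constructor
  · intro a
    constructor
    · exact isOpen_interior.preimage (continuous_id.add continuous_const)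
    · apply Set.Subset.antisymm
      · rintro _ ⟨y, hy, g, hg, rfl⟩
        show y + g + a ∈ interior γ
        have := hintadd (y + a) hy g hg
        convert this using 1
        abel
      · intro y hy
        exact ⟨y, hy, 0, h0, by simp⟩
  · intro U hU hγU x hx
    -- x - t • e ∈ U for small t > 0
    have hf : Continuous fun t : ℝ => x - t • e :=
      continuous_const.sub (continuous_id.smul continuous_const)
    have hmem : (fun t : ℝ => x - t • e) ⁻¹' U ∈ nhds (0 : ℝ) := by
      apply (hU.preimage hf).mem_nhds
      simpa using hx
    obtain ⟨ε, hε, hball⟩ := Metric.mem_nhds_iff.mp hmem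
    set t : ℝ := ε / 2 with ht
    have htpos : 0 < t := by positivity
    have hxt : x - t • e ∈ U := by
      apply hball
      simp only [Metric.mem_ball, Real.dist_eq, sub_zero, abs_of_pos htpos]
      linarith
    refine ⟨t • e - x, ?_, ?_⟩
    · show x + (t • e - x) ∈ interior γ
      have : x + (t • e - x) = t • e := by abel
      rw [this]
      exact hintsmul t htpos e he
    · intro y hy
      have hy' : y + (t • e - x) ∈ γ := interior_subset hy
      have : (x - t • e) + (y + (t • e - x)) ∈ U + γ :=
        Set.add_mem_add hxt hy'
      rw [hγU] at this
      convert this using 1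
      abel
end

section
/- Let γ be a closed convex cone in ℝ^n with nonempty interior and let A ⊆ ℝ^n be a dense subgroup. Then the family {γ̊ − a : a ∈ A} is already a basis of the γ-topology. -/
open Pointwise

/-- For a closed convex cone `γ ⊆ ℝⁿ` with nonempty interior and a dense additive
subgroup `A ⊆ ℝⁿ`, already the translates `γ̊ - a` with `a ∈ A` form a basis of the
γ-topology. -/
theorem gammaInterior_dense_translates_basis {n : ℕ} (γ : Set (EuclideanSpace ℝ (Fin n)))
    (hclosed : IsClosed γ)
    (hadd : ∀ x ∈ γ, ∀ y ∈ γ, x + y ∈ γ)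
    (hsmul : ∀ c : ℝ, 0 < c → ∀ x ∈ γ, c • x ∈ γ)
    (hint : (interior γ).Nonempty)
    (A : AddSubgroup (EuclideanSpace ℝ (Fin n)))
    (hA : Dense (A : Set (EuclideanSpace ℝ (Fin n)))) :
    (∀ a ∈ A,
        IsOpen {x : EuclideanSpace ℝ (Fin n) | x + a ∈ interior γ} ∧
        {x : EuclideanSpace ℝ (Fin n) | x + a ∈ interior γ} + γ =
          {x : EuclideanSpace ℝ (Fin n) | x + a ∈ interior γ}) ∧
    (∀ U : Set (EuclideanSpace ℝ (Fin n)), IsOpen U → U + γ = U →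
        ∀ x ∈ U, ∃ a ∈ A,
          x ∈ {y : EuclideanSpace ℝ (Fin n) | y + a ∈ interior γ} ∧
          {y : EuclideanSpace ℝ (Fin n) | y + a ∈ interior γ} ⊆ U) := by
  obtain ⟨v, hv⟩ := hint
  have hvγ : v ∈ γ := interior_subset hv
  -- 0 ∈ γ
  have h0 : (0 : EuclideanSpace ℝ (Fin n)) ∈ γ := by
    have hlim : Filter.Tendsto (fun k : ℕ => (1 / (k + 1) : ℝ) • v) Filter.atTop
        (nhds ((0 : ℝ) • v)) :=
      (tendsto_one_div_add_atTop_nhds_zero_nat).smul_const v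
    rw [zero_smul] at hlim
    exact hclosed.mem_of_tendsto hlim
      (Filter.Eventually.of_forall fun k => hsmul _ (by positivity) v hvγ)
  -- interior γ is stable under adding elements of γ
  have key : ∀ g ∈ γ, ∀ w ∈ interior γ, w + g ∈ interior γ := by
    intro g hg w hw
    have hmap : (fun y => y + g) '' interior γ ⊆ interior γ :=
      interior_maximal
        (by rintro _ ⟨u, hu, rfl⟩; exact hadd u (interior_subset hu) g hg)
        ((isOpenMap_add_right g) _ isOpen_interior)
    exact hmap ⟨w, hw, rfl⟩
  -- interior γ is stable under positive scaling
  have hscale : ∀ t : ℝ, 0 < t → ∀ w ∈ interior γ, t • w ∈ interior γ := by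
    intro t ht w hw
    have hmap : (fun y : EuclideanSpace ℝ (Fin n) => t • y) '' interior γ ⊆ interior γ :=
      interior_maximal
        (by rintro _ ⟨u, hu, rfl⟩; exact hsmul t ht u (interior_subset hu))
        (isOpenMap_smul₀ (ne_of_gt ht) _ isOpen_interior)
    exact hmap ⟨w, hw, rfl⟩
  constructor
  · intro a _
    constructor
    · exact (isOpen_interior.preimage (continuous_id.add continuous_const) :
        IsOpen ((fun x => x + a) ⁻¹' interior γ))
    · apply Set.Subset.antisymm
      · intro z hz
        rw [Set.mem_add] at hz
        obtain ⟨u, hu, g, hg, rfl⟩ := hz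
        have h1 : u + a + g ∈ interior γ := key g hg _ hu
        have heq : u + g + a = u + a + g := by abel
        show u + g + a ∈ interior γ
        rw [heq]; exact h1
      · intro z hz
        rw [Set.mem_add]
        exact ⟨z, hz, 0, h0, add_zero z⟩
  · intro U hU hUγ x hx
    obtain ⟨ε, hε, hball⟩ := Metric.isOpen_iff.mp hU x hx
    set t : ℝ := min 1 (ε / (2 * (‖v‖ + 1))) with ht_def
    have ht : 0 < t := lt_min one_pos (by positivity)
    have hnv : (0:ℝ) ≤ ‖v‖ := norm_nonneg v
    have hp0 : t • v ∈ interior γ := hscale t ht v hv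
    have hp0n : ‖t • v‖ < ε / 2 := by
      rw [norm_smul, Real.norm_eq_abs, abs_of_pos ht]
      have h1 : t ≤ ε / (2 * (‖v‖ + 1)) := min_le_right _ _
      have h2 : t * ‖v‖ ≤ ε / (2 * (‖v‖ + 1)) * ‖v‖ :=
        mul_le_mul_of_nonneg_right h1 hnv
      have h3 : ε / (2 * (‖v‖ + 1)) * ‖v‖ < ε / 2 := by
        rw [div_mul_eq_mul_div, div_lt_div_iff₀ (by positivity) (by norm_num)]
        nlinarith
      linarith
    obtain ⟨r, hr, hrball⟩ := Metric.isOpen_iff.mp isOpen_interior _ hp0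
    set r' : ℝ := min r (ε / 2) with hr'_def
    have hr' : 0 < r' := lt_min hr (by positivity)
    obtain ⟨b, hbA, hbd⟩ := Metric.mem_closure_iff.mp (hA (t • v - x)) r' hr'
    refine ⟨b, hbA, ?_, ?_⟩
    · -- x + b ∈ interior γ
      show x + b ∈ interior γ
      apply hrball
      rw [Metric.mem_ball, dist_eq_norm]
      have heq : x + b - t • v = -(t • v - x - b) := by abel
      rw [heq, norm_neg]
      rw [dist_eq_norm] at hbd
      exact lt_of_lt_of_le hbd (min_le_left _ _)
    · -- translate is contained in U
      intro y hy
      have hyγ : y + b ∈ γ := interior_subset hy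
      have hxb : ‖x + b‖ < ε := by
        have h1 : ‖x + b - t • v‖ < r' := by
          rw [dist_eq_norm] at hbd
          have heq : x + b - t • v = -(t • v - x - b) := by abel
          rw [heq, norm_neg]
          exact hbd
        calc ‖x + b‖ = ‖(x + b - t • v) + t • v‖ := by rw [sub_add_cancel]
          _ ≤ ‖x + b - t • v‖ + ‖t • v‖ := norm_add_le _ _
          _ < r' + ε / 2 := by linarith
          _ ≤ ε / 2 + ε / 2 := by
              have := min_le_right r (ε / 2); linarith
          _ = ε := by ring
      have hnegb : -b ∈ U := by
        apply hball
        rw [Metric.mem_ball, dist_eq_norm]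
        have heq : -b - x = -(x + b) := by abel
        rw [heq, norm_neg]
        exact hxb
      have hmem : -b + (y + b) ∈ U + γ := Set.add_mem_add hnegb hyγ
      rw [hUγ] at hmem
      have heq : -b + (y + b) = y := by abel
      rwa [heq] at hmem
end

section
/- Let σ₁ and σ₂ be polyhedral closed convex cones in ℝ^n such that τ = σ₁ ∩ σ₂ is a face of both σ₁ and σ₂. Then for any m in the relative interior of σ₁∨ ∩ (−σ₂∨), one has σ₁ ∩ H_m = τ = σ₂ ∩ H_m, where H_m = {n ∈ ℝ^n : ⟨m, n⟩ = 0}. -/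
open scoped RealInnerProductSpace Pointwise

/-- The polar dual cone of a subset of `ℝⁿ`. -/
def dualCone {n : ℕ} (σ : Set (EuclideanSpace ℝ (Fin n))) : Set (EuclideanSpace ℝ (Fin n)) :=
  {v | ∀ w ∈ σ, 0 ≤ ⟪v, w⟫}

/-- A polyhedral cone: a finite intersection of closed linear half-spaces. -/
def IsPolyhedralCone {n : ℕ} (σ : Set (EuclideanSpace ℝ (Fin n))) : Prop :=
  ∃ s : Finset (EuclideanSpace ℝ (Fin n)), σ = {x | ∀ m ∈ s, 0 ≤ ⟪m, x⟫}

/-- `τ` is a face of `σ`: it is cut out of `σ` by a supporting hyperplane `⟪m, ·⟫ = 0`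
with `m` in the dual cone of `σ`. -/
def IsFaceOf {n : ℕ} (τ σ : Set (EuclideanSpace ℝ (Fin n))) : Prop :=
  ∃ m ∈ dualCone σ, τ = σ ∩ {x | ⟪m, x⟫ = 0}

section SeparationAux
variable {n : ℕ}
local notation "E" => EuclideanSpace ℝ (Fin n)

/-- The cone generated by a finite set of vectors. -/
def fgCone (s : Finset E) : Set E :=
  {x | ∃ c : EuclideanSpace ℝ (Fin n) → ℝ, (∀ v ∈ s, 0 ≤ c v) ∧ ∑ v ∈ s, c v • v = x}

lemma fgCone_zero_mem (s : Finset E) : (0 : E) ∈ fgCone s :=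
  ⟨0, fun _ _ => le_rfl, by simp⟩

lemma fgCone_add_mem {s : Finset E} {x y : E} (hx : x ∈ fgCone s) (hy : y ∈ fgCone s) :
    x + y ∈ fgCone s := by
  obtain ⟨c, hc, rfl⟩ := hx
  obtain ⟨d, hd, rfl⟩ := hy
  exact ⟨c + d, fun v hv => add_nonneg (hc v hv) (hd v hv), by
    simp [add_smul, Finset.sum_add_distrib]⟩

lemma fgCone_smul_mem {s : Finset E} {x : E} {t : ℝ} (ht : 0 ≤ t) (hx : x ∈ fgCone s) :
    t • x ∈ fgCone s := by
  obtain ⟨c, hc, rfl⟩ := hx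
  exact ⟨t • c, fun v hv => mul_nonneg ht (hc v hv), by
    simp [Finset.smul_sum, smul_smul]⟩

lemma fgCone_gen_mem {s : Finset E} {v : E} (hv : v ∈ s) : v ∈ fgCone s := by
  classical
  refine ⟨fun w => if w = v then 1 else 0, fun w _ => by positivity, ?_⟩
  rw [Finset.sum_eq_single v]
  · simp
  · intro w _ hw; simp [hw]
  · intro h; exact absurd hv h

lemma fgCone_mono {s t : Finset E} (h : s ⊆ t) : fgCone s ⊆ fgCone t := by
  classical
  rintro x ⟨c, hc, rfl⟩
  refine ⟨fun v => if v ∈ s then c v else 0, fun v _ => ?_, ?_⟩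
  · dsimp only; split
    · exact hc v ‹_›
    · exact le_rfl
  · rw [← Finset.sum_subset h]
    · exact Finset.sum_congr rfl fun v hv => by simp [hv]
    · intro v _ hv; simp [hv]

lemma fgCone_induction {s : Finset E} {P : E → Prop} (h0 : P 0)
    (hadd : ∀ a b, P a → P b → P (a + b))
    (hgen : ∀ v ∈ s, ∀ t : ℝ, 0 ≤ t → P (t • v)) :
    ∀ x ∈ fgCone s, P x := by
  rintro x ⟨c, hc, rfl⟩
  exact Finset.sum_induction _ _ hadd h0 fun v hv => hgen v hv (c v) (hc v hv)

lemma fgCone_sum_mem {ι : Type*} {s : Finset E} (t : Finset ι) (f : ι → E)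
    (h : ∀ i ∈ t, f i ∈ fgCone s) : ∑ i ∈ t, f i ∈ fgCone s :=
  Finset.sum_induction _ _ (fun _ _ => fgCone_add_mem) (fgCone_zero_mem s) h

-- subtype-coefficient characterization
lemma mem_fgCone_iff' {s : Finset E} {x : E} :
    x ∈ fgCone s ↔ ∃ c : {v // v ∈ s} → ℝ, (∀ i, 0 ≤ c i) ∧ ∑ i : {v // v ∈ s}, c i • (i : E) = x := by
  classical
  constructor
  · rintro ⟨c, hc, rfl⟩
    refine ⟨fun i => c i, fun i => hc i i.2, ?_⟩
    rw [← Finset.sum_attach s (fun v => c v • v)]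
    rfl
  · rintro ⟨c, hc, rfl⟩
    refine ⟨fun v => if h : v ∈ s then c ⟨v, h⟩ else 0, fun v hv => by simp [hv, hc], ?_⟩
    rw [← Finset.sum_attach s (fun v => (if h : v ∈ s then c ⟨v, h⟩ else 0) • v)]
    exact Finset.sum_congr rfl fun i _ => by simp [i.2]

-- reduction step for Caratheodory
lemma fgCone_reduce {s : Finset E} {x : E}
    (hdep : ¬ LinearIndependent ℝ ((↑) : {v // v ∈ s} → E)) (hx : x ∈ fgCone s) :
    ∃ t, t ⊂ s ∧ x ∈ fgCone t := by
  classical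
  obtain ⟨c, hc, hsum⟩ := mem_fgCone_iff'.mp hx
  obtain ⟨g, hg0, i₀, hi₀⟩ := Fintype.not_linearIndependent_iff.mp hdep
  -- find a relation with some positive coefficient
  have hrel : ∃ g : {v // v ∈ s} → ℝ, (∑ i, g i • (i : E)) = 0 ∧ ∃ i, 0 < g i := by
    rcases lt_trichotomy (g i₀) 0 with h | h | h
    · exact ⟨-g, by simpa using hg0, i₀, by simpa using h⟩
    · exact absurd h hi₀
    · exact ⟨g, hg0, i₀, h⟩
  clear hg0 hi₀
  obtain ⟨g, hg0, hpos⟩ := hrel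
  -- minimize c i / g i over positive g i
  have hne : ({i | 0 < g i} : Finset {v // v ∈ s}).Nonempty := by
    obtain ⟨i, hi⟩ := hpos
    exact ⟨i, by simpa using hi⟩
  obtain ⟨j, hj, hjmin⟩ := Finset.exists_min_image _ (fun i => c i / g i) hne
  have hgj : 0 < g j := by simpa using hj
  set r := c j / g j with hr
  have hr0 : 0 ≤ r := div_nonneg (hc j) hgj.le
  refine ⟨s.erase (j : E), Finset.erase_ssubset j.2, ?_⟩
  -- new coefficients
  have key : ∀ i, 0 ≤ c i - r * g i := by
    intro i
    rcases le_or_gt (g i) 0 with h | h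
    · nlinarith [hc i]
    · have h1 := hjmin i (by simpa using h)
      have h2 : r * g i ≤ c i := by
        rw [← div_mul_cancel₀ (c i) h.ne']
        exact mul_le_mul_of_nonneg_right h1 h.le
      linarith
  have hsum2 : ∑ i : {v // v ∈ s}, (c i - r * g i) • (i : E) = x := by
    simp only [sub_smul, Finset.sum_sub_distrib, hsum, mul_smul]
    rw [← Finset.smul_sum, hg0, smul_zero, sub_zero]
  -- use explicit coefficient function with zero at j
  refine ⟨fun v => if h : v ∈ s then c ⟨v, h⟩ - r * g ⟨v, h⟩ else 0, ?_, ?_⟩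
  · intro v hv
    have : v ∈ s := Finset.mem_of_mem_erase hv
    simp only [this, dif_pos]
    exact key _
  · have heq : ∑ v ∈ s.erase (j : E), (fun v => if h : v ∈ s then c ⟨v, h⟩ - r * g ⟨v, h⟩ else 0) v • v
        = ∑ v ∈ s, (fun v => if h : v ∈ s then c ⟨v, h⟩ - r * g ⟨v, h⟩ else 0) v • v := by
      refine Finset.sum_subset (Finset.erase_subset _ _) ?_
      intro v hv hnv
      have hvj : v = (j : E) := by
        by_contra hne'
        exact hnv (Finset.mem_erase.mpr ⟨hne', hv⟩)
      have hsub : (⟨v, hv⟩ : {v // v ∈ s}) = j := Subtype.ext hvj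
      simp only [hv, dif_pos, hsub, hr, div_mul_cancel₀ _ hgj.ne', sub_self, zero_smul]
    rw [heq, ← hsum2, ← Finset.sum_attach s (fun v => (if h : v ∈ s then c ⟨v,h⟩ - r * g ⟨v,h⟩ else 0) • v)]
    exact Finset.sum_congr rfl fun i _ => by simp [i.2]

lemma fgCone_caratheodory (s : Finset E) :
    ∀ x ∈ fgCone s, ∃ t, t ⊆ s ∧ LinearIndependent ℝ ((↑) : {v // v ∈ t} → E) ∧ x ∈ fgCone t := by
  classical
  induction s using Finset.strongInduction with
  | _ s ih =>
    intro x hx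
    by_cases hli : LinearIndependent ℝ ((↑) : {v // v ∈ s} → E)
    · exact ⟨s, subset_rfl, hli, hx⟩
    · obtain ⟨u, hu, hx'⟩ := fgCone_reduce hli hx
      obtain ⟨t, hts, hlit, hxt⟩ := ih u hu x hx'
      exact ⟨t, hts.trans hu.subset, hlit, hxt⟩

lemma fgCone_isClosed_of_li {t : Finset E}
    (h : LinearIndependent ℝ ((↑) : {v // v ∈ t} → E)) : IsClosed (fgCone t) := by
  classical
  set F := Fintype.linearCombination ℝ ((↑) : {v // v ∈ t} → E) with hF
  have hker : LinearMap.ker F = ⊥ := by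
    rw [LinearMap.ker_eq_bot']
    intro g hg
    have := Fintype.linearIndependent_iff.mp h g (by simpa [hF, Fintype.linearCombination_apply] using hg)
    funext i; exact this i
  have hemb : Topology.IsClosedEmbedding ⇑F := LinearMap.isClosedEmbedding_of_injective hker
  have himg : fgCone t = F '' {c | ∀ i, 0 ≤ c i} := by
    ext x
    rw [mem_fgCone_iff']
    constructor
    · rintro ⟨c, hc, rfl⟩
      exact ⟨c, hc, by simp [hF, Fintype.linearCombination_apply]⟩
    · rintro ⟨c, hc, rfl⟩
      exact ⟨c, hc, by simp [hF, Fintype.linearCombination_apply]⟩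
  have hcl : IsClosed {c : {v // v ∈ t} → ℝ | ∀ i, 0 ≤ c i} := by
    have h2 : {c : {v // v ∈ t} → ℝ | ∀ i, 0 ≤ c i} = ⋂ i, {c | 0 ≤ c i} := by
      ext; simp [Set.mem_iInter]
    rw [h2]
    exact isClosed_iInter fun i => isClosed_le continuous_const (continuous_apply i)
  rw [himg]
  exact hemb.isClosedMap _ hcl

lemma fgCone_isClosed (s : Finset E) : IsClosed (fgCone s) := by
  classical
  have hmono : ∀ {s t : Finset E}, s ⊆ t → fgCone s ⊆ fgCone t := by
    rintro s t h x ⟨c, hc, rfl⟩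
    refine ⟨fun v => if v ∈ s then c v else 0, fun v _ => ?_, ?_⟩
    · dsimp only; split
      · exact hc v ‹_›
      · exact le_rfl
    · rw [← Finset.sum_subset h]
      · exact Finset.sum_congr rfl fun v hv => by simp [hv]
      · intro v _ hv; simp [hv]
  have : fgCone s = ⋃ t ∈ {t : Finset E | t ⊆ s ∧ LinearIndependent ℝ ((↑) : {v // v ∈ t} → E)},
      fgCone t := by
    ext x
    simp only [Set.mem_iUnion, Set.mem_setOf_eq]
    constructor
    · intro hx
      obtain ⟨t, h1, h2, h3⟩ := fgCone_caratheodory s x hx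
      exact ⟨t, ⟨h1, h2⟩, h3⟩
    · rintro ⟨t, ⟨h1, _⟩, h3⟩
      exact hmono h1 h3
  rw [this]
  refine Set.Finite.isClosed_biUnion ?_ fun t ht => fgCone_isClosed_of_li ht.2
  exact (s.powerset.finite_toSet).subset fun t ht => Finset.mem_powerset.mpr ht.1

lemma fgCone_inter_halfspace (s : Finset E) (u : E) :
    ∃ s' : Finset E, fgCone s ∩ {x | 0 ≤ ⟪u, x⟫} = fgCone s' := by
  classical
  set A := s.filter (fun v => 0 ≤ ⟪u, v⟫) with hA
  set B := ((s ×ˢ s).filter (fun p => 0 < ⟪u, p.1⟫ ∧ ⟪u, p.2⟫ < 0)).image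
      (fun p => ⟪u, p.1⟫ • p.2 - ⟪u, p.2⟫ • p.1) with hB
  refine ⟨A ∪ B, ?_⟩
  apply Set.Subset.antisymm
  · -- hard direction
    rintro x ⟨hxs, hxu⟩
    obtain ⟨c, hc, hxsum⟩ := hxs
    set PP := s.filter (fun v => 0 < ⟪u, v⟫) with hPP
    set NZ := s.filter (fun v => ¬ 0 < ⟪u, v⟫) with hNZ
    set N := NZ.filter (fun v => ⟪u, v⟫ < 0) with hN
    set Z := NZ.filter (fun v => ¬ ⟪u, v⟫ < 0) with hZ
    have hPs : ∀ v ∈ PP, v ∈ s ∧ 0 < ⟪u, v⟫ := fun v hv => Finset.mem_filter.mp hv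
    have hNs : ∀ v ∈ N, v ∈ s ∧ ⟪u, v⟫ < 0 := by
      intro v hv
      have h1 := Finset.mem_filter.mp hv
      exact ⟨(Finset.mem_filter.mp h1.1).1, h1.2⟩
    have hZs : ∀ v ∈ Z, v ∈ s ∧ ⟪u, v⟫ = 0 := by
      intro v hv
      have h1 := Finset.mem_filter.mp hv
      have h2 := Finset.mem_filter.mp h1.1
      exact ⟨h2.1, le_antisymm (not_lt.mp h2.2) (not_lt.mp h1.2)⟩
    set SP := ∑ v ∈ PP, c v • v with hSP
    set SN := ∑ v ∈ N, c v • v with hSN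
    set SZ := ∑ v ∈ Z, c v • v with hSZ
    have hsplit : SP + (SN + SZ) = x := by
      rw [hSP, hSN, hSZ, hN, hZ, Finset.sum_filter_add_sum_filter_not NZ,
        hPP, hNZ, Finset.sum_filter_add_sum_filter_not s]
      exact hxsum
    set p := ∑ v ∈ PP, c v * ⟪u, v⟫ with hp
    set q := ∑ v ∈ N, c v * ⟪u, v⟫ with hq
    have hinner : ⟪u, x⟫ = p + q := by
      rw [← hxsum, inner_sum]
      have : ∀ v ∈ s, ⟪u, c v • v⟫ = c v * ⟪u, v⟫ := fun v _ =>
        real_inner_smul_right _ _ _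
      rw [Finset.sum_congr rfl this]
      rw [← Finset.sum_filter_add_sum_filter_not s (fun v => 0 < ⟪u, v⟫), ← hPP, ← hNZ, ← hp]
      congr 1
      rw [← Finset.sum_filter_add_sum_filter_not NZ (fun v => ⟪u, v⟫ < 0), ← hN, ← hZ, ← hq]
      have : ∑ v ∈ Z, c v * ⟪u, v⟫ = 0 :=
        Finset.sum_eq_zero fun v hv => by rw [(hZs v hv).2, mul_zero]
      rw [this, add_zero]
    -- membership helpers
    have hSPmem : SP ∈ fgCone (A ∪ B) := by
      refine fgCone_sum_mem _ _ fun v hv => ?_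
      refine fgCone_smul_mem (hc v (hPs v hv).1) (fgCone_gen_mem ?_)
      exact Finset.mem_union_left _ (Finset.mem_filter.mpr ⟨(hPs v hv).1, (hPs v hv).2.le⟩)
    have hSZmem : SZ ∈ fgCone (A ∪ B) := by
      refine fgCone_sum_mem _ _ fun v hv => ?_
      refine fgCone_smul_mem (hc v (hZs v hv).1) (fgCone_gen_mem ?_)
      exact Finset.mem_union_left _ (Finset.mem_filter.mpr ⟨(hZs v hv).1, (hZs v hv).2.ge⟩)
    have hq0 : q ≤ 0 := Finset.sum_nonpos fun v hv =>
      mul_nonpos_of_nonneg_of_nonpos (hc v (hNs v hv).1) (hNs v hv).2.le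
    rcases eq_or_lt_of_le hq0 with hqe | hqlt
    · -- q = 0 : all N coefficients vanish
      have hzero : ∀ v ∈ N, c v * ⟪u, v⟫ = 0 := by
        intro v hv
        have := (Finset.sum_eq_zero_iff_of_nonpos (fun v hv =>
          mul_nonpos_of_nonneg_of_nonpos (hc v (hNs v hv).1) (hNs v hv).2.le)).mp hqe
        exact this v hv
      have hSN0 : SN = 0 := Finset.sum_eq_zero fun v hv => by
        have hcv : c v = 0 := by
          have := hzero v hv
          rcases mul_eq_zero.mp this with h | h
          · exact h
          · exact absurd h (hNs v hv).2.ne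
        rw [hcv, zero_smul]
      rw [← hsplit, hSN0, zero_add]
      exact fgCone_add_mem hSPmem hSZmem
    · -- q < 0, so p > 0
      have hpq : 0 ≤ p + q := by rw [← hinner]; exact hxu
      have hppos : 0 < p := by linarith
      set T := ∑ v ∈ PP, ∑ w ∈ N, (c v * c w) • (⟪u, v⟫ • w - ⟪u, w⟫ • v) with hT
      have hTmem : T ∈ fgCone (A ∪ B) := by
        refine fgCone_sum_mem _ _ fun v hv => fgCone_sum_mem _ _ fun w hw => ?_
        refine fgCone_smul_mem (mul_nonneg (hc v (hPs v hv).1) (hc w (hNs w hw).1))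
          (fgCone_gen_mem (Finset.mem_union_right _ ?_))
        refine Finset.mem_image.mpr ⟨(v, w), ?_, rfl⟩
        exact Finset.mem_filter.mpr ⟨Finset.mem_product.mpr ⟨(hPs v hv).1, (hNs w hw).1⟩,
          (hPs v hv).2, (hNs w hw).2⟩
      have hTid : T = p • SN - q • SP := by
        have hterm : ∀ v ∈ PP, ∀ w ∈ N, (c v * c w) • (⟪u, v⟫ • w - ⟪u, w⟫ • v)
            = (c v * ⟪u, v⟫) • (c w • w) - (c w * ⟪u, w⟫) • (c v • v) := by
          intro v _ w _
          rw [smul_sub, smul_smul, smul_smul, smul_smul, smul_smul]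
          congr 2 <;> ring
        have hrow : ∀ v ∈ PP, ∑ w ∈ N, (c v * c w) • (⟪u, v⟫ • w - ⟪u, w⟫ • v)
            = (c v * ⟪u, v⟫) • SN - q • (c v • v) := by
          intro v hv
          rw [Finset.sum_congr rfl (hterm v hv), Finset.sum_sub_distrib,
            ← Finset.smul_sum, ← Finset.sum_smul, ← hSN, ← hq]
        rw [hT, Finset.sum_congr rfl hrow, Finset.sum_sub_distrib,
          ← Finset.sum_smul, ← Finset.smul_sum, ← hp, ← hSP]
      have hxid : ((p + q)/p) • SP + p⁻¹ • T + SZ = x := by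
        rw [hTid, ← hsplit]
        have hne := hppos.ne'
        match_scalars <;> field_simp <;> ring
      rw [← hxid]
      exact fgCone_add_mem (fgCone_add_mem
        (fgCone_smul_mem (div_nonneg hpq hppos.le) hSPmem)
        (fgCone_smul_mem (inv_nonneg.mpr hppos.le) hTmem)) hSZmem
  · -- easy direction
    intro x hx
    refine fgCone_induction ?_ ?_ ?_ x hx
    · refine ⟨fgCone_zero_mem s, ?_⟩
      show (0:ℝ) ≤ ⟪u, (0 : EuclideanSpace ℝ (Fin n))⟫
      simp
    · rintro a b ⟨ha1, ha2⟩ ⟨hb1, hb2⟩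
      refine ⟨fgCone_add_mem ha1 hb1, ?_⟩
      have h2 : (0:ℝ) ≤ ⟪u, a⟫ := ha2
      have h3 : (0:ℝ) ≤ ⟪u, b⟫ := hb2
      show (0:ℝ) ≤ ⟪u, a + b⟫
      rw [inner_add_right]
      exact add_nonneg h2 h3
    · rintro v hv t ht
      have hP : v ∈ fgCone s ∧ 0 ≤ ⟪u, v⟫ := by
        rcases Finset.mem_union.mp hv with h | h
        · have h1 := Finset.mem_filter.mp h
          exact ⟨fgCone_gen_mem h1.1, h1.2⟩
        · obtain ⟨⟨v', w'⟩, hmem, rfl⟩ := Finset.mem_image.mp h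
          have h1 := Finset.mem_filter.mp hmem
          have h2 := Finset.mem_product.mp h1.1
          constructor
          · have heq : ⟪u, v'⟫ • w' - ⟪u, w'⟫ • v' = ⟪u, v'⟫ • w' + (-⟪u, w'⟫) • v' := by
              rw [neg_smul, ← sub_eq_add_neg]
            rw [heq]
            exact fgCone_add_mem
              (fgCone_smul_mem h1.2.1.le (fgCone_gen_mem h2.2))
              (fgCone_smul_mem (by linarith [h1.2.2]) (fgCone_gen_mem h2.1))
          · show (0:ℝ) ≤ ⟪u, ⟪u, v'⟫ • w' - ⟪u, w'⟫ • v'⟫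
            rw [inner_sub_right, real_inner_smul_right, real_inner_smul_right]
            have : ⟪u, v'⟫ * ⟪u, w'⟫ - ⟪u, w'⟫ * ⟪u, v'⟫ = 0 := by ring
            linarith
      refine ⟨fgCone_smul_mem ht hP.1, ?_⟩
      show (0:ℝ) ≤ ⟪u, t • v⟫
      rw [real_inner_smul_right]
      exact mul_nonneg ht hP.2

/-- The whole space is a finitely generated cone. -/
lemma fgCone_univ : ∃ g : Finset E, (Set.univ : Set E) = fgCone g := by
  classical
  refine ⟨(Finset.univ.image fun i : Fin n => EuclideanSpace.single i (1:ℝ)) ∪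
    (Finset.univ.image fun i : Fin n => -EuclideanSpace.single i (1:ℝ)), ?_⟩
  refine Set.eq_of_subset_of_subset (fun x _ => ?_) (fun x _ => trivial)
  have hrepr : ∑ i : Fin n, x i • EuclideanSpace.single i (1:ℝ) = x := by
    have h := (EuclideanSpace.basisFun (Fin n) ℝ).sum_repr x
    simpa using h
  rw [← hrepr]
  refine fgCone_sum_mem _ _ fun i _ => ?_
  rcases le_or_gt 0 (x i) with h | h
  · exact fgCone_smul_mem h (fgCone_gen_mem (Finset.mem_union_left _
      (Finset.mem_image.mpr ⟨i, Finset.mem_univ i, rfl⟩)))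
  · have : x i • EuclideanSpace.single i (1:ℝ) = (-(x i)) • (-EuclideanSpace.single i (1:ℝ)) := by
      rw [neg_smul, smul_neg, neg_neg]
    rw [this]
    exact fgCone_smul_mem (by linarith) (fgCone_gen_mem (Finset.mem_union_right _
      (Finset.mem_image.mpr ⟨i, Finset.mem_univ i, rfl⟩)))

/-- Every polyhedral cone is finitely generated. -/
lemma polyhedral_fg (s : Finset E) :
    ∃ g : Finset E, {x : E | ∀ m ∈ s, 0 ≤ ⟪m, x⟫} = fgCone g := by
  classical
  induction s using Finset.induction with
  | empty =>
    obtain ⟨g, hg⟩ := fgCone_univ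
    exact ⟨g, by simpa using hg⟩
  | @insert u s hu ih =>
    obtain ⟨g, hg⟩ := ih
    obtain ⟨g', hg'⟩ := fgCone_inter_halfspace g u
    refine ⟨g', ?_⟩
    rw [← hg', ← hg]
    ext x
    simp only [Set.mem_inter_iff, Set.mem_setOf_eq, Finset.mem_insert]
    constructor
    · intro h
      exact ⟨fun m hm => h m (Or.inr hm), h u (Or.inl rfl)⟩
    · rintro ⟨h1, h2⟩ m hm
      rcases hm with rfl | hm
      · exact h2
      · exact h1 m hm

/-- Extension past a relative interior point. -/
lemma relint_extend {S : Set E} {m c : E} (hm : m ∈ intrinsicInterior ℝ S) (hc : c ∈ S) :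
    ∃ ε : ℝ, 0 < ε ∧ m + ε • (m - c) ∈ S := by
  obtain ⟨y, hy, hym⟩ := mem_intrinsicInterior.mp hm
  have hT : ((↑) ⁻¹' S : Set <| affineSpan ℝ S) ∈ nhds y := mem_interior_iff_mem_nhds.mp hy
  rw [mem_nhds_subtype] at hT
  obtain ⟨V, hV, hVsub⟩ := hT
  obtain ⟨r, hr, hball⟩ := Metric.mem_nhds_iff.mp hV
  set ε : ℝ := r / (2 * (‖(y : E) - c‖ + 1)) with hε
  have hεpos : 0 < ε := by
    apply div_pos hr
    positivity
  set z : E := (1 + ε) • ((y : E) -ᵥ c) +ᵥ c with hz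
  have hzspan : z ∈ affineSpan ℝ S :=
    (affineSpan ℝ S).smul_vsub_vadd_mem (1 + ε) y.2 (subset_affineSpan ℝ S hc)
      (subset_affineSpan ℝ S hc)
  have hzy : z = (y : E) + ε • ((y : E) - c) := by
    rw [hz]
    simp only [vsub_eq_sub, vadd_eq_add]
    module
  have hzball : z ∈ Metric.ball (y : E) r := by
    rw [Metric.mem_ball, dist_eq_norm, hzy]
    have : (y : E) + ε • ((y : E) - c) - (y : E) = ε • ((y : E) - c) := by abel
    rw [this, norm_smul, Real.norm_of_nonneg hεpos.le]
    have hb : ‖(y : E) - c‖ < ‖(y : E) - c‖ + 1 := by linarith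
    have h2 : ε * ‖(y : E) - c‖ ≤ r / 2 := by
      rw [hε]
      rw [div_mul_eq_mul_div, div_le_div_iff₀ (by positivity) (by norm_num)]
      have h3 : 0 ≤ ‖(y : E) - c‖ := norm_nonneg _
      nlinarith
    linarith
  have : (⟨z, hzspan⟩ : affineSpan ℝ S) ∈ Subtype.val ⁻¹' V := hball hzball
  have hzS : z ∈ S := hVsub this
  exact ⟨ε, hεpos, by rw [hym] at hzy; rw [← hzy]; exact hzS⟩

lemma fgCone_neg_mem [DecidableEq (EuclideanSpace ℝ (Fin n))] {s : Finset E} {x : E} (hx : x ∈ fgCone s) :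
    -x ∈ fgCone (s.image fun v => -v) := by
  classical
  refine fgCone_induction (P := fun x => -x ∈ fgCone (s.image fun v => -v)) ?_ ?_ ?_ x hx
  · show -(0 : EuclideanSpace ℝ (Fin n)) ∈ fgCone (s.image fun v => -v)
    rw [neg_zero]; exact fgCone_zero_mem _
  · intro a b ha hb
    show -(a + b) ∈ fgCone (s.image fun v => -v)
    rw [neg_add]
    exact fgCone_add_mem ha hb
  · intro v hv t ht
    show -(t • v) ∈ fgCone (s.image fun v => -v)
    have h5 : -(t • v) = t • (-v) := by rw [smul_neg]
    rw [h5]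
    exact fgCone_smul_mem ht (fgCone_gen_mem (Finset.mem_image.mpr ⟨v, hv, rfl⟩))

lemma fgCone_double_dual (G : Finset E) (x : E)
    (hx : ∀ y : E, (∀ w ∈ fgCone G, 0 ≤ ⟪w, y⟫) → 0 ≤ ⟪y, x⟫) : x ∈ fgCone G := by
  by_contra hxG
  have hconv : Convex ℝ (fgCone G) := fun a ha b hb s t hs ht _ =>
    fgCone_add_mem (fgCone_smul_mem hs ha) (fgCone_smul_mem ht hb)
  obtain ⟨f, u, hfu, hux⟩ := geometric_hahn_banach_closed_point hconv (fgCone_isClosed G) hxG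
  have hu0 : 0 < u := by simpa using hfu 0 (fgCone_zero_mem G)
  have hf : ∀ a ∈ fgCone G, f a ≤ 0 := by
    intro a ha
    by_contra h
    push_neg at h
    have := hfu ((u / f a) • a) (fgCone_smul_mem (div_nonneg hu0.le h.le) ha)
    rw [map_smul, smul_eq_mul, div_mul_cancel₀ _ h.ne'] at this
    exact lt_irrefl _ this
  have h1 := hx (-(InnerProductSpace.toDual ℝ E).symm f) (fun w hw => by
    rw [real_inner_comm, inner_neg_left, InnerProductSpace.toDual_symm_apply]
    linarith [hf w hw])
  rw [inner_neg_left, InnerProductSpace.toDual_symm_apply] at h1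
  linarith

end SeparationAux

/-- Separation lemma: if `σ₁, σ₂` are polyhedral closed convex cones such that
`τ = σ₁ ∩ σ₂` is a face of each, then for any `m` in the relative interior of
`σ₁∨ ∩ (−σ₂∨)` one has `σ₁ ∩ H_m = τ = σ₂ ∩ H_m`. -/
theorem separation_lemma {n : ℕ}
    (σ₁ σ₂ : Set (EuclideanSpace ℝ (Fin n)))
    (hp₁ : IsPolyhedralCone σ₁) (hp₂ : IsPolyhedralCone σ₂)
    (hface₁ : IsFaceOf (σ₁ ∩ σ₂) σ₁) (hface₂ : IsFaceOf (σ₁ ∩ σ₂) σ₂)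
    (m : EuclideanSpace ℝ (Fin n))
    (hm : m ∈ intrinsicInterior ℝ (dualCone σ₁ ∩ -dualCone σ₂)) :
    σ₁ ∩ {x | ⟪m, x⟫ = 0} = σ₁ ∩ σ₂ ∧ σ₂ ∩ {x | ⟪m, x⟫ = 0} = σ₁ ∩ σ₂ := by
  classical
  obtain ⟨s₁, hs₁⟩ := hp₁
  obtain ⟨s₂, hs₂⟩ := hp₂
  obtain ⟨m₁, hm₁, hτ₁⟩ := hface₁
  obtain ⟨m₂, hm₂, hτ₂⟩ := hface₂
  set C := dualCone σ₁ ∩ -dualCone σ₂ with hC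
  have hmC : m ∈ C := intrinsicInterior_subset hm
  -- closure properties of σᵢ
  have hσ₁add : ∀ x y, x ∈ σ₁ → y ∈ σ₁ → x + y ∈ σ₁ := by
    intro x y hx hy
    rw [hs₁] at hx hy ⊢
    intro v hv
    rw [inner_add_right]
    exact add_nonneg (hx v hv) (hy v hv)
  have hσ₂add : ∀ x y, x ∈ σ₂ → y ∈ σ₂ → x + y ∈ σ₂ := by
    intro x y hx hy
    rw [hs₂] at hx hy ⊢
    intro v hv
    rw [inner_add_right]
    exact add_nonneg (hx v hv) (hy v hv)
  have hσ₁zero : (0 : EuclideanSpace ℝ (Fin n)) ∈ σ₁ := by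
    rw [hs₁]; intro v _; rw [inner_zero_right]
  have hσ₂zero : (0 : EuclideanSpace ℝ (Fin n)) ∈ σ₂ := by
    rw [hs₂]; intro v _; rw [inner_zero_right]
  -- fg descriptions
  obtain ⟨g₁, hg₁⟩ := polyhedral_fg s₁
  obtain ⟨g₂, hg₂⟩ := polyhedral_fg s₂
  rw [← hs₁] at hg₁
  rw [← hs₂] at hg₂
  -- the difference cone
  set G : Finset (EuclideanSpace ℝ (Fin n)) := g₁ ∪ g₂.image (fun v => -v) with hG
  set D := fgCone G with hD
  have hsub : D ⊆ {z : EuclideanSpace ℝ (Fin n) | ∃ a ∈ σ₁, ∃ b ∈ σ₂, z = a - b} := by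
    intro z hz
    refine fgCone_induction (P := fun z => ∃ a ∈ σ₁, ∃ b ∈ σ₂, z = a - b) ?_ ?_ ?_ z hz
    · exact ⟨0, hσ₁zero, 0, hσ₂zero, by rw [sub_zero]⟩
    · rintro z w ⟨a, ha, b, hb, rfl⟩ ⟨a', ha', b', hb', rfl⟩
      exact ⟨a + a', hσ₁add a a' ha ha', b + b', hσ₂add b b' hb hb', by abel⟩
    · intro v hv t ht
      rcases Finset.mem_union.mp hv with h | h
      · refine ⟨t • v, ?_, 0, hσ₂zero, by rw [sub_zero]⟩
        rw [hg₁]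
        exact fgCone_smul_mem ht (fgCone_gen_mem h)
      · obtain ⟨w, hw, rfl⟩ := Finset.mem_image.mp h
        refine ⟨0, hσ₁zero, t • w, ?_, by rw [zero_sub, smul_neg]⟩
        rw [hg₂]
        exact fgCone_smul_mem ht (fgCone_gen_mem hw)
  -- D as a convex cone
  set K : ConvexCone ℝ (EuclideanSpace ℝ (Fin n)) :=
    { carrier := D
      smul_mem' := fun c hc x hx => fgCone_smul_mem hc.le hx
      add_mem' := fun x hx y hy => fgCone_add_mem hx hy } with hK
  have hdd := fgCone_double_dual G
  -- the dual of D is contained in C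
  have hdualC : ∀ y : EuclideanSpace ℝ (Fin n), (∀ w ∈ D, 0 ≤ ⟪w, y⟫) → y ∈ C := by
    intro y hy
    constructor
    · intro w hw
      rw [real_inner_comm]
      refine hy w ?_
      show w ∈ D
      rw [hg₁] at hw
      exact fgCone_mono Finset.subset_union_left hw
    · rw [Set.mem_neg]
      intro w hw
      have hnw : -w ∈ D := by
        rw [hg₂] at hw
        exact fgCone_mono Finset.subset_union_right (fgCone_neg_mem hw)
      have := hy (-w) hnw
      rw [inner_neg_left, ← inner_neg_right]
      rwa [real_inner_comm]
  -- key step: vectors orthogonal to C pair to zero with m₁ and m₂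
  have key : ∀ x : EuclideanSpace ℝ (Fin n), (∀ c ∈ C, ⟪c, x⟫ = 0) → ⟪m₁, x⟫ = 0 ∧ ⟪m₂, x⟫ = 0 := by
    intro x hx
    have hxD : x ∈ D := by
      have : x ∈ D := by
        apply hdd
        intro y hy
        have h := hx y (hdualC y hy)
        have h2 : ⟪x, y⟫ = (0:ℝ) := by rw [real_inner_comm]; exact h
        linarith [h2]
      exact this
    have hxD' : -x ∈ D := by
      have : -x ∈ D := by
        apply hdd
        intro y hy
        have h := hx y (hdualC y hy)
        have h2 : ⟪x, y⟫ = (0:ℝ) := by rw [real_inner_comm]; exact h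
        have h3 : ⟪y, -x⟫ = (0:ℝ) := by rw [inner_neg_right, h, neg_zero]
        have h4 : ⟪-x, y⟫ = (0:ℝ) := by rw [real_inner_comm]; exact h3
        linarith [h3, h4]
      exact this
    obtain ⟨a, ha, b, hb, hab⟩ := hsub hxD
    obtain ⟨a', ha', b', hb', hab'⟩ := hsub hxD'
    have hsum : a + a' = b + b' := by
      have h0 : (a - b) + (a' - b') = 0 := by rw [← hab, ← hab']; abel
      have h1 : (a + a') - (b + b') = 0 := by rw [← h0]; abel
      exact sub_eq_zero.mp h1
    have htau : a + a' ∈ σ₁ ∩ σ₂ :=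
      ⟨hσ₁add a a' ha ha', hsum ▸ hσ₂add b b' hb hb'⟩
    have hm₁sum : ⟪m₁, a + a'⟫ = 0 := (hτ₁ ▸ htau).2
    have hm₂sum : ⟪m₂, b + b'⟫ = 0 := (hτ₂ ▸ (hsum ▸ htau)).2
    have hm₁a : ⟪m₁, a⟫ = 0 := by
      have h1 := hm₁ a ha
      have h2 := hm₁ a' ha'
      rw [inner_add_right] at hm₁sum
      linarith
    have hm₂b : ⟪m₂, b⟫ = 0 := by
      have h1 := hm₂ b hb
      have h2 := hm₂ b' hb'
      rw [inner_add_right] at hm₂sum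
      linarith
    have haτ : a ∈ σ₁ ∩ σ₂ := hτ₁ ▸ ⟨ha, hm₁a⟩
    have hbτ : b ∈ σ₁ ∩ σ₂ := hτ₂ ▸ ⟨hb, hm₂b⟩
    have hm₂a : ⟪m₂, a⟫ = 0 := (hτ₂ ▸ haτ).2
    have hm₁b : ⟪m₁, b⟫ = 0 := (hτ₁ ▸ hbτ).2
    subst hab
    constructor
    · rw [inner_sub_right, hm₁a, hm₁b, sub_zero]
    · rw [inner_sub_right, hm₂a, hm₂b, sub_zero]
  -- easy inclusions
  have heasy : σ₁ ∩ σ₂ ⊆ {x | ⟪m, x⟫ = 0} := by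
    rintro x ⟨hx1, hx2⟩
    have h1 : 0 ≤ ⟪m, x⟫ := hmC.1 x hx1
    have h2 : 0 ≤ ⟪-m, x⟫ := (Set.mem_neg.mp hmC.2) x hx2
    rw [inner_neg_left] at h2
    show ⟪m, x⟫ = 0
    linarith
  constructor
  · apply Set.eq_of_subset_of_subset
    · rintro x ⟨hx1, hx0⟩
      have hx0' : ⟪m, x⟫ = 0 := hx0
      have hperp : ∀ c ∈ C, ⟪c, x⟫ = 0 := by
        intro c hc
        have hge : 0 ≤ ⟪c, x⟫ := hc.1 x hx1
        obtain ⟨ε, hε, hmem⟩ := relint_extend hm hc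
        have hge2 : 0 ≤ ⟪m + ε • (m - c), x⟫ := hmem.1 x hx1
        rw [inner_add_left, real_inner_smul_left, inner_sub_left, hx0'] at hge2
        nlinarith
      have := (key x hperp).1
      rw [hτ₁]
      exact ⟨hx1, this⟩
    · intro x hx
      exact ⟨hx.1, heasy hx⟩
  · apply Set.eq_of_subset_of_subset
    · rintro x ⟨hx2, hx0⟩
      have hx0' : ⟪m, x⟫ = 0 := hx0
      have hperp : ∀ c ∈ C, ⟪c, x⟫ = 0 := by
        intro c hc
        have hle : 0 ≤ ⟪-c, x⟫ := (Set.mem_neg.mp hc.2) x hx2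
        rw [inner_neg_left] at hle
        obtain ⟨ε, hε, hmem⟩ := relint_extend hm hc
        have hge2 : 0 ≤ ⟪-(m + ε • (m - c)), x⟫ := (Set.mem_neg.mp hmem.2) x hx2
        rw [inner_neg_left, inner_add_left, real_inner_smul_left, inner_sub_left, hx0'] at hge2
        nlinarith
      have := (key x hperp).2
      rw [hτ₂]
      exact ⟨hx2, this⟩
    · intro x hx
      exact ⟨hx.2, heasy hx⟩
end

section
/- Let σ be a polyhedral closed convex cone in ℝ^n and let τ = σ ∩ H_m be the face of σ cut out by the hyperplane H_m = {n : ⟨m,n⟩ = 0} for some m ∈ σ∨. Then the dual cone of τ satisfies τ∨ = σ∨ + ℝ_{≥0}·(−m). -/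
open scoped RealInnerProductSpace Pointwise

namespace DualFaceAux

variable {n : ℕ}

/-- The cone of nonnegative combinations of a finite set. -/
def coneOf (s : Finset (EuclideanSpace ℝ (Fin n))) : Set (EuclideanSpace ℝ (Fin n)) :=
  {x | ∃ l : EuclideanSpace ℝ (Fin n) → ℝ, (∀ a ∈ s, 0 ≤ l a) ∧ x = ∑ a ∈ s, l a • a}

def FinIndep (s : Finset (EuclideanSpace ℝ (Fin n))) : Prop :=
  ∀ c : EuclideanSpace ℝ (Fin n) → ℝ, ∑ a ∈ s, c a • a = 0 → ∀ a ∈ s, c a = 0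

theorem coneOf_mono {s t : Finset (EuclideanSpace ℝ (Fin n))} (h : t ⊆ s) :
    coneOf t ⊆ coneOf s := by
  classical
  rintro x ⟨l, hl, rfl⟩
  refine ⟨fun a => if a ∈ t then l a else 0, ?_, ?_⟩
  · intro a _
    simp only []
    split_ifs with ha
    · exact hl a ha
    · rfl
  · rw [← Finset.sum_subset h (fun a _ ha => by simp [ha])]
    exact Finset.sum_congr rfl fun a ha => by simp [ha]

theorem caratheodory (s : Finset (EuclideanSpace ℝ (Fin n))) :
    ∀ x ∈ coneOf s, ∃ t ⊆ s, FinIndep t ∧ x ∈ coneOf t := by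
  induction s using Finset.strongInduction with
  | _ s ih =>
    rintro x ⟨l, hl, rfl⟩
    by_cases hs : FinIndep s
    · exact ⟨s, le_refl _, hs, l, hl, rfl⟩
    · -- get a dependence relation with a positive coefficient
      simp only [FinIndep, not_forall] at hs
      obtain ⟨c, hc0, a₀, ha₀s, ha₀⟩ := hs
      have key : ∃ c : EuclideanSpace ℝ (Fin n) → ℝ,
          ∑ a ∈ s, c a • a = 0 ∧ ∃ a ∈ s, 0 < c a := by
        rcases lt_or_gt_of_ne ha₀ with h | h
        · refine ⟨fun a => -c a, ?_, a₀, ha₀s, by simpa using neg_pos.mpr h⟩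
          simp only [neg_smul, Finset.sum_neg_distrib, hc0, neg_zero]
        · exact ⟨c, hc0, a₀, ha₀s, h⟩
      obtain ⟨c, hcsum, hcpos⟩ := key
      -- minimize l a / c a over positive coefficients
      classical
      obtain ⟨b, hb, hbmin⟩ := Finset.exists_min_image (s.filter fun a => 0 < c a)
        (fun a => l a / c a) (by
          obtain ⟨a, has, hca⟩ := hcpos
          exact ⟨a, Finset.mem_filter.mpr ⟨has, hca⟩⟩)
      rw [Finset.mem_filter] at hb
      obtain ⟨hbs, hcb⟩ := hb
      set r := l b / c b with hr
      have hr0 : 0 ≤ r := div_nonneg (hl b hbs) hcb.le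
      set l' : EuclideanSpace ℝ (Fin n) → ℝ := fun a => l a - r * c a with hl'
      have hl'0 : ∀ a ∈ s, 0 ≤ l' a := by
        intro a has
        by_cases hca : 0 < c a
        · have hm := hbmin a (Finset.mem_filter.mpr ⟨has, hca⟩)
          rw [hr, div_le_div_iff₀ hcb hca] at hm
          have hrb : r * c b = l b := by rw [hr]; field_simp
          simp only [hl']
          nlinarith [mul_pos hcb hca, hcb]
        · push_neg at hca
          have : r * c a ≤ 0 := mul_nonpos_of_nonneg_of_nonpos hr0 hca
          have := hl a has
          simp only [hl']; linarith
      have hl'b : l' b = 0 := by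
        simp only [hl', hr]; field_simp; ring
      have hsum : ∑ a ∈ s, l a • a = ∑ a ∈ s.erase b, l' a • a := by
        calc ∑ a ∈ s, l a • a = ∑ a ∈ s, (l' a • a + (r * c a) • a) := by
              refine Finset.sum_congr rfl fun a _ => ?_
              simp only [hl']; rw [← add_smul]; ring_nf
          _ = ∑ a ∈ s, l' a • a + r • ∑ a ∈ s, c a • a := by
              rw [Finset.sum_add_distrib, Finset.smul_sum]
              simp [mul_smul]
          _ = ∑ a ∈ s, l' a • a := by rw [hcsum, smul_zero, add_zero]
          _ = ∑ a ∈ s.erase b, l' a • a := by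
              rw [← Finset.sum_erase_add _ _ hbs, hl'b, zero_smul, add_zero]
      obtain ⟨t, hts, htind, hxt⟩ := ih (s.erase b) (Finset.erase_ssubset hbs)
        _ ⟨l', fun a ha => hl'0 a (Finset.mem_of_mem_erase ha), rfl⟩
      exact ⟨t, hts.trans (Finset.erase_subset _ _), htind, by rwa [hsum]⟩

theorem isClosed_coneOf_of_finIndep {s : Finset (EuclideanSpace ℝ (Fin n))}
    (hs : FinIndep s) : IsClosed (coneOf s) := by
  classical
  set f : ({a // a ∈ s} → ℝ) →ₗ[ℝ] EuclideanSpace ℝ (Fin n) :=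
    { toFun := fun l => ∑ a : {a // a ∈ s}, l a • (a : EuclideanSpace ℝ (Fin n))
      map_add' := by intro u v; simp [add_smul, Finset.sum_add_distrib]
      map_smul' := by intro c u; simp [Finset.smul_sum, mul_smul] }
  have hker : LinearMap.ker f = ⊥ := by
    rw [LinearMap.ker_eq_bot']
    intro l hlf
    have : ∑ a ∈ s, (fun x => if h : x ∈ s then l ⟨x, h⟩ else 0) a • a = 0 := by
      rw [← Finset.sum_attach s (fun a => (fun x => if h : x ∈ s then l ⟨x, h⟩ else 0) a • a)]
      simpa [f] using hlf
    funext a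
    have := hs _ this a.1 a.2
    simpa [a.2] using this
  have hce := LinearMap.isClosedEmbedding_of_injective (𝕜 := ℝ) hker
  have himg : coneOf s = f '' {l | ∀ a, 0 ≤ l a} := by
    ext x
    constructor
    · rintro ⟨l, hl, rfl⟩
      refine ⟨fun a => l a.1, fun a => hl a.1 a.2, ?_⟩
      simp only [f, LinearMap.coe_mk, AddHom.coe_mk]
      rw [← Finset.sum_attach s (fun a => l a • a)]
      rfl
    · rintro ⟨l, hl, rfl⟩
      refine ⟨fun x => if h : x ∈ s then l ⟨x, h⟩ else 0, fun a ha => by simp only []; rw [dif_pos ha]; exact hl ⟨a, ha⟩, ?_⟩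
      simp only [f, LinearMap.coe_mk, AddHom.coe_mk]
      rw [← Finset.sum_attach s (fun a => (fun x => if h : x ∈ s then l ⟨x, h⟩ else 0) a • a)]
      refine Finset.sum_congr rfl fun a _ => by simp [a.2]
  rw [himg]
  refine hce.isClosedMap _ ?_
  have : {l : {a // a ∈ s} → ℝ | ∀ a, 0 ≤ l a} = ⋂ a, {l | 0 ≤ l a} := by
    ext l; simp [Set.mem_iInter]
  rw [this]
  exact isClosed_iInter fun a => isClosed_le continuous_const (continuous_apply a)

theorem isClosed_coneOf (s : Finset (EuclideanSpace ℝ (Fin n))) : IsClosed (coneOf s) := by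
  classical
  have : coneOf s = ⋃ t ∈ {t : Finset (EuclideanSpace ℝ (Fin n)) | t ⊆ s ∧ FinIndep t},
      coneOf t := by
    ext x
    simp only [Set.mem_iUnion, Set.mem_setOf_eq]
    constructor
    · intro hx
      obtain ⟨t, hts, hind, hxt⟩ := caratheodory s x hx
      exact ⟨t, ⟨hts, hind⟩, hxt⟩
    · rintro ⟨t, ⟨hts, -⟩, hxt⟩
      exact coneOf_mono hts hxt
  rw [this]
  refine Set.Finite.isClosed_biUnion ?_ fun t ht => isClosed_coneOf_of_finIndep ht.2
  exact Set.Finite.subset (Set.finite_Iic s) fun t ht => Finset.le_iff_subset.mpr ht.1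

theorem zero_mem_coneOf (s : Finset (EuclideanSpace ℝ (Fin n))) : 0 ∈ coneOf s :=
  ⟨fun _ => 0, fun _ _ => le_rfl, by simp⟩

theorem mem_coneOf_self {s : Finset (EuclideanSpace ℝ (Fin n))}
    {a : EuclideanSpace ℝ (Fin n)} (ha : a ∈ s) : a ∈ coneOf s := by
  classical
  refine ⟨fun b => if b = a then 1 else 0, fun b _ => by simp only []; split_ifs <;> norm_num, ?_⟩
  have : ∑ b ∈ s, (fun b => if b = a then (1:ℝ) else 0) b • b
      = ∑ b ∈ s, (if b = a then b else 0) := by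
    refine Finset.sum_congr rfl fun b _ => ?_
    simp only []; split_ifs <;> simp
  rw [this, Finset.sum_ite_eq' s a (fun b => b), if_pos ha]

theorem add_mem_coneOf {s : Finset (EuclideanSpace ℝ (Fin n))}
    {x y : EuclideanSpace ℝ (Fin n)} (hx : x ∈ coneOf s) (hy : y ∈ coneOf s) :
    x + y ∈ coneOf s := by
  obtain ⟨l, hl, rfl⟩ := hx
  obtain ⟨l', hl', rfl⟩ := hy
  exact ⟨fun a => l a + l' a, fun a ha => add_nonneg (hl a ha) (hl' a ha),
    by rw [← Finset.sum_add_distrib]; exact Finset.sum_congr rfl fun a _ => (add_smul _ _ _).symm⟩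

theorem smul_mem_coneOf {s : Finset (EuclideanSpace ℝ (Fin n))}
    {c : ℝ} (hc : 0 ≤ c) {x : EuclideanSpace ℝ (Fin n)} (hx : x ∈ coneOf s) :
    c • x ∈ coneOf s := by
  obtain ⟨l, hl, rfl⟩ := hx
  exact ⟨fun a => c * l a, fun a ha => mul_nonneg hc (hl a ha),
    by rw [Finset.smul_sum]; exact Finset.sum_congr rfl fun a _ => (mul_smul _ _ _).symm⟩

theorem farkas (s : Finset (EuclideanSpace ℝ (Fin n))) :
    dualCone {x | ∀ a ∈ s, 0 ≤ ⟪a, x⟫} = coneOf s := by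
  apply Set.Subset.antisymm
  · intro v hv
    by_contra hvK
    let K : ProperCone ℝ (EuclideanSpace ℝ (Fin n)) :=
      { carrier := coneOf s
        zero_mem' := zero_mem_coneOf s
        smul_mem' := fun c x hx => smul_mem_coneOf c.2 hx
        add_mem' := fun hx hy => add_mem_coneOf hx hy
        isClosed' := isClosed_coneOf s }
    obtain ⟨y, hy1, hy2⟩ := K.hyperplane_separation' hvK
    rw [real_inner_comm] at hy2
    have hyσ : ∀ a ∈ s, 0 ≤ ⟪a, y⟫ := fun a ha => hy1 a (mem_coneOf_self ha)
    have := hv y hyσ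
    rw [real_inner_comm] at this
    linarith
  · rintro x ⟨l, hl, rfl⟩ w hw
    rw [sum_inner]
    refine Finset.sum_nonneg fun a ha => ?_
    rw [real_inner_smul_left]
    exact mul_nonneg (hl a ha) (hw a ha)

end DualFaceAux

open DualFaceAux

/-- For a polyhedral closed convex cone `σ` and the face `τ = σ ∩ {⟪m,·⟫ = 0}` cut out by
`m ∈ σ∨`, the dual cone of `τ` is `σ∨ + ℝ≥0·(−m)` (Minkowski sum). -/
theorem dualCone_face {n : ℕ}
    (σ : Set (EuclideanSpace ℝ (Fin n)))
    (hp : IsPolyhedralCone σ)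
    (m : EuclideanSpace ℝ (Fin n)) (hm : m ∈ dualCone σ) :
    dualCone (σ ∩ {x | ⟪m, x⟫ = 0}) =
      dualCone σ + {x | ∃ c : ℝ, 0 ≤ c ∧ x = c • (-m)} := by
  classical
  obtain ⟨s, rfl⟩ := hp
  have hτ : {x : EuclideanSpace ℝ (Fin n) | ∀ a ∈ s, 0 ≤ ⟪a, x⟫} ∩ {x | ⟪m, x⟫ = 0}
      = {x | ∀ a ∈ insert (-m) s, 0 ≤ ⟪a, x⟫} := by
    ext x
    simp only [Set.mem_inter_iff, Set.mem_setOf_eq, Finset.forall_mem_insert, inner_neg_left]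
    constructor
    · rintro ⟨h1, h2⟩
      exact ⟨by rw [h2]; norm_num, h1⟩
    · rintro ⟨h1, h2⟩
      refine ⟨h2, le_antisymm (by linarith) (hm x h2)⟩
  rw [hτ, farkas, farkas]
  apply Set.Subset.antisymm
  · rintro x ⟨l, hl, rfl⟩
    by_cases hms : -m ∈ s
    · rw [Finset.insert_eq_self.mpr hms]
      have h1 : (∑ a ∈ s, l a • a) ∈ coneOf s :=
        ⟨l, fun a ha => hl a (by rw [Finset.insert_eq_self.mpr hms]; exact ha), rfl⟩
      have h2 : ((0:ℝ) • (-m)) ∈ {x : EuclideanSpace ℝ (Fin n) | ∃ c : ℝ, 0 ≤ c ∧ x = c • (-m)} :=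
        ⟨0, le_rfl, rfl⟩
      have := Set.add_mem_add h1 h2
      simpa using this
    · rw [Finset.sum_insert hms]
      have h1 : (∑ a ∈ s, l a • a) ∈ coneOf s :=
        ⟨l, fun a ha => hl a (Finset.mem_insert_of_mem ha), rfl⟩
      have h2 : (l (-m) • (-m)) ∈ {x : EuclideanSpace ℝ (Fin n) | ∃ c : ℝ, 0 ≤ c ∧ x = c • (-m)} :=
        ⟨l (-m), hl _ (Finset.mem_insert_self _ _), rfl⟩
      have heq : l (-m) • -m + ∑ a ∈ s, l a • a = ∑ a ∈ s, l a • a + l (-m) • -m :=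
        add_comm _ _
      rw [heq]
      exact Set.add_mem_add h1 h2
  · rintro x ⟨u, hu, v, ⟨c, hc, rfl⟩, rfl⟩
    exact add_mem_coneOf (coneOf_mono (Finset.subset_insert _ _) hu)
      (smul_mem_coneOf hc (mem_coneOf_self (Finset.mem_insert_self _ _)))
end

section
/- Let σ₁, σ₂ be polyhedral closed convex cones in ℝ^n whose intersection τ = σ₁ ∩ σ₂ is a face of each. Then τ∨ = σ₁∨ + σ₂∨ (Minkowski sum of the dual cones). -/
open scoped RealInnerProductSpace Pointwise

open scoped Classical

section Cone

variable {H : Type*} [NormedAddCommGroup H] [InnerProductSpace ℝ H] [FiniteDimensional ℝ H]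

/-- The set of nonnegative combinations of elements of `s`. -/
def coneSet (s : Finset H) : Set H :=
  {x | ∃ c : H → ℝ, (∀ v ∈ s, 0 ≤ c v) ∧ ∑ v ∈ s, c v • v = x}

lemma coneSet_mono {t s : Finset H} (h : t ⊆ s) : coneSet t ⊆ coneSet s := by
  rintro x ⟨c, hc, rfl⟩
  refine ⟨fun v => if v ∈ t then c v else 0, fun v _ => ?_, ?_⟩
  · dsimp only
    split_ifs with hvt
    · exact hc v hvt
    · exact le_rfl
  · rw [← Finset.sum_subset h (fun v _ hvt => by simp [hvt])]
    exact Finset.sum_congr rfl fun v hv => by simp [hv]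

lemma zero_mem_coneSet (s : Finset H) : (0 : H) ∈ coneSet s :=
  ⟨fun _ => 0, fun _ _ => le_rfl, by simp⟩

lemma subset_coneSet (s : Finset H) : (s : Set H) ⊆ coneSet s := by
  intro v hv
  refine ⟨fun w => if w = v then 1 else 0, fun w _ => by dsimp only; split_ifs <;> norm_num, ?_⟩
  simp only [ite_smul, one_smul, zero_smul]
  rw [Finset.sum_ite_eq' s v (fun w => w)]
  exact if_pos (Finset.mem_coe.mp hv)

end Cone

section Cone2
variable {H : Type*} [NormedAddCommGroup H] [InnerProductSpace ℝ H] [FiniteDimensional ℝ H]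

/-- Conic Carathéodory: every element of `coneSet s` lies in `coneSet t` for a
linearly independent subset `t ⊆ s`. -/
lemma coneSet_caratheodory :
    ∀ (N : ℕ) (s : Finset H), s.card ≤ N → ∀ x ∈ coneSet s,
      ∃ t ⊆ s, LinearIndependent ℝ (fun v : ↥t => (v : H)) ∧ x ∈ coneSet t := by
  intro N
  induction N with
  | zero =>
    intro s hs x hx
    rw [Nat.le_zero, Finset.card_eq_zero] at hs
    subst hs
    exact ⟨∅, Finset.Subset.refl _, linearIndependent_empty_type, hx⟩
  | succ N ih =>
    intro s hs x hx
    by_cases hli : LinearIndependent ℝ (fun v : ↥s => (v : H))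
    · exact ⟨s, Finset.Subset.refl _, hli, hx⟩
    -- extract a nontrivial relation with a positive coefficient
    obtain ⟨g, hg0, i₀, hgi₀⟩ := Fintype.not_linearIndependent_iff.mp hli
    obtain ⟨d, hd0, hdpos⟩ :
        ∃ d : H → ℝ, (∑ v ∈ s, d v • v = 0) ∧ ∃ v ∈ s, 0 < d v := by
      rcases lt_or_gt_of_ne hgi₀ with hneg | hpos
      · refine ⟨fun v => if h : v ∈ s then -g ⟨v, h⟩ else 0, ?_, ↑i₀, i₀.2, ?_⟩
        · rw [← Finset.sum_coe_sort s (fun v => (if h : v ∈ s then -g ⟨v, h⟩ else 0) • v)]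
          simp only [Subtype.coe_eta, dif_pos (Finset.coe_mem _)]
          simp only [neg_smul]
          rw [Finset.sum_neg_distrib, neg_eq_zero]
          exact hg0
        · simp only [dif_pos i₀.2, Subtype.coe_eta]
          linarith
      · refine ⟨fun v => if h : v ∈ s then g ⟨v, h⟩ else 0, ?_, ↑i₀, i₀.2, ?_⟩
        · rw [← Finset.sum_coe_sort s (fun v => (if h : v ∈ s then g ⟨v, h⟩ else 0) • v)]
          simp only [Subtype.coe_eta, dif_pos (Finset.coe_mem _)]
          exact hg0
        · simp only [dif_pos i₀.2, Subtype.coe_eta]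
          exact hpos
    obtain ⟨c, hc, hcx⟩ := hx
    -- minimize c v / d v over positive d v
    have hPne : (s.filter (fun v => 0 < d v)).Nonempty := by
      obtain ⟨v, hv, hdv⟩ := hdpos
      exact ⟨v, Finset.mem_filter.mpr ⟨hv, hdv⟩⟩
    obtain ⟨v₀, hv₀P, hv₀min⟩ :=
      Finset.exists_min_image (s.filter (fun v => 0 < d v)) (fun v => c v / d v) hPne
    obtain ⟨hv₀s, hdv₀⟩ := Finset.mem_filter.mp hv₀P
    set r : ℝ := c v₀ / d v₀ with hr
    have hr0 : 0 ≤ r := div_nonneg (hc v₀ hv₀s) hdv₀.le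
    have hc' : ∀ v ∈ s, 0 ≤ c v - r * d v := by
      intro v hv
      by_cases h : 0 < d v
      · have := hv₀min v (Finset.mem_filter.mpr ⟨hv, h⟩)
        rw [le_div_iff₀ h] at this
        linarith
      · nlinarith [hc v hv, mul_nonneg hr0 (neg_nonneg.mpr (not_lt.mp h))]
    have hsum : ∑ v ∈ s, (c v - r * d v) • v = x := by
      simp only [sub_smul, mul_smul, Finset.sum_sub_distrib, hcx]
      rw [← Finset.smul_sum, hd0, smul_zero, sub_zero]
    have hcv₀ : c v₀ - r * d v₀ = 0 := by
      rw [hr, div_mul_cancel₀ _ hdv₀.ne', sub_self]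
    have hxerase : x ∈ coneSet (s.erase v₀) := by
      refine ⟨fun v => c v - r * d v, fun v hv => hc' v (Finset.mem_of_mem_erase hv), ?_⟩
      rw [← hsum, ← Finset.add_sum_erase s _ hv₀s, hcv₀, zero_smul, zero_add]
    obtain ⟨t, ht, htli, hxt⟩ := ih (s.erase v₀)
      (by
        have h1 := Finset.card_erase_of_mem hv₀s
        omega) x hxerase
    exact ⟨t, ht.trans (Finset.erase_subset _ _), htli, hxt⟩
end Cone2

section Cone3
variable {H : Type*} [NormedAddCommGroup H] [InnerProductSpace ℝ H] [FiniteDimensional ℝ H]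

lemma isClosed_coneSet_of_linearIndependent (t : Finset H)
    (h : LinearIndependent ℝ (fun v : ↥t => (v : H))) : IsClosed (coneSet t) := by
  set f : (↥t → ℝ) →ₗ[ℝ] H := Fintype.linearCombination ℝ (fun v : ↥t => (v : H)) with hf
  have hker : LinearMap.ker f = ⊥ := by
    rw [LinearMap.ker_eq_bot']
    intro g hg
    rw [hf, Fintype.linearCombination_apply] at hg
    funext i
    exact Fintype.linearIndependent_iff.mp h g hg i
  have hce : Topology.IsClosedEmbedding f := LinearMap.isClosedEmbedding_of_injective hker
  have himg : coneSet t = f '' {c : ↥t → ℝ | ∀ i, 0 ≤ c i} := by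
    ext x
    constructor
    · rintro ⟨c, hc, rfl⟩
      refine ⟨fun i => c ↑i, fun i => hc ↑i i.2, ?_⟩
      rw [hf, Fintype.linearCombination_apply]
      exact Finset.sum_coe_sort t (fun v => c v • v)
    · rintro ⟨g, hg, rfl⟩
      refine ⟨fun v => if h : v ∈ t then g ⟨v, h⟩ else 0, fun v hv => ?_, ?_⟩
      · dsimp only
        rw [dif_pos hv]; exact hg _
      · rw [hf, Fintype.linearCombination_apply,
          ← Finset.sum_coe_sort t (fun v => (if h : v ∈ t then g ⟨v, h⟩ else 0) • v)]
        exact Finset.sum_congr rfl fun i _ => by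
          rw [dif_pos (Finset.coe_mem i), Subtype.coe_eta]
  rw [himg]
  refine hce.isClosedMap _ ?_
  have : {c : ↥t → ℝ | ∀ i, 0 ≤ c i} = ⋂ i, (fun c : ↥t → ℝ => c i) ⁻¹' Set.Ici 0 := by
    ext c; simp [Set.mem_iInter]
  rw [this]
  exact isClosed_iInter fun i => IsClosed.preimage (continuous_apply i) isClosed_Ici

lemma isClosed_coneSet (s : Finset H) : IsClosed (coneSet s) := by
  have hunion : coneSet s =
      ⋃ t ∈ {t : Finset H | t ⊆ s ∧ LinearIndependent ℝ (fun v : ↥t => (v : H))}, coneSet t := by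
    ext x
    simp only [Set.mem_iUnion, Set.mem_setOf_eq]
    constructor
    · intro hx
      obtain ⟨t, ht, htli, hxt⟩ := coneSet_caratheodory s.card s le_rfl x hx
      exact ⟨t, ⟨ht, htli⟩, hxt⟩
    · rintro ⟨t, ⟨ht, _⟩, hxt⟩
      exact coneSet_mono ht hxt
  rw [hunion]
  have hfin : {t : Finset H | t ⊆ s ∧ LinearIndependent ℝ (fun v : ↥t => (v : H))}.Finite :=
    Set.Finite.subset s.powerset.finite_toSet (fun t ht => Finset.mem_coe.mpr
      (Finset.mem_powerset.mpr ht.1))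
  exact Set.Finite.isClosed_biUnion hfin fun t ht =>
    isClosed_coneSet_of_linearIndependent t ht.2
end Cone3

section Cone4
variable {H : Type*} [NormedAddCommGroup H] [InnerProductSpace ℝ H] [FiniteDimensional ℝ H]

/-- `coneSet s` as a convex cone. -/
def coneCC (s : Finset H) : ConvexCone ℝ H where
  carrier := coneSet s
  smul_mem' := by
    rintro r hr x ⟨c, hc, rfl⟩
    refine ⟨fun v => r * c v, fun v hv => mul_nonneg hr.le (hc v hv), ?_⟩
    rw [Finset.smul_sum]
    exact Finset.sum_congr rfl fun v _ => by rw [mul_smul]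
  add_mem' := by
    rintro x ⟨c, hc, rfl⟩ y ⟨d, hd, rfl⟩
    refine ⟨fun v => c v + d v, fun v hv => add_nonneg (hc v hv) (hd v hv), ?_⟩
    rw [← Finset.sum_add_distrib]
    exact Finset.sum_congr rfl fun v _ => by rw [add_smul]

lemma coneCC_coe (s : Finset H) : (coneCC s : Set H) = coneSet s := rfl

lemma mem_dual_gen_iff (s : Finset H) (y : H) :
    (∀ m ∈ s, 0 ≤ ⟪m, y⟫) ↔ ∀ x ∈ coneSet s, 0 ≤ ⟪x, y⟫ := by
  constructor
  · rintro h x ⟨c, hc, rfl⟩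
    rw [sum_inner]
    refine Finset.sum_nonneg fun v hv => ?_
    rw [real_inner_smul_left]
    exact mul_nonneg (hc v hv) (h v hv)
  · intro h m hm
    exact h m (subset_coneSet s (Finset.mem_coe.mpr hm))

lemma bipolar_coneSet (s : Finset H) :
    (ProperCone.innerDual (ProperCone.innerDual (coneSet s) : Set H) : Set H) = coneSet s := by
  let C : ProperCone ℝ H :=
    { toSubmodule := (coneCC s).toPointedCone (zero_mem_coneSet s),
      isClosed' := isClosed_coneSet s }
  have := ProperCone.innerDual_innerDual C
  calc (ProperCone.innerDual (ProperCone.innerDual (coneSet s) : Set H) : Set H)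
      = (ProperCone.innerDual (ProperCone.innerDual (C : Set H) : Set H) : Set H) := rfl
    _ = (C : Set H) := by rw [this]
    _ = coneSet s := rfl

end Cone4

section Main
variable {n : ℕ}

lemma dualCone_eq_innerDualCone (A : Set (EuclideanSpace ℝ (Fin n))) :
    dualCone A = (ProperCone.innerDual A : Set (EuclideanSpace ℝ (Fin n))) := by
  ext v
  simp only [dualCone, Set.mem_setOf_eq, SetLike.mem_coe, ProperCone.mem_innerDual]
  exact ⟨fun h w hw => by rw [real_inner_comm]; exact h w hw,
    fun h w hw => by rw [real_inner_comm]; exact h hw⟩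

lemma dualCone_halfspaces (s : Finset (EuclideanSpace ℝ (Fin n))) :
    dualCone {x | ∀ m ∈ s, 0 ≤ ⟪m, x⟫} = coneSet s := by
  have h1 : {x : EuclideanSpace ℝ (Fin n) | ∀ m ∈ s, 0 ≤ ⟪m, x⟫}
      = (ProperCone.innerDual (coneSet s) : Set (EuclideanSpace ℝ (Fin n))) := by
    ext x
    rw [Set.mem_setOf_eq, SetLike.mem_coe, ProperCone.mem_innerDual]
    exact mem_dual_gen_iff s x
  rw [h1, dualCone_eq_innerDualCone, bipolar_coneSet]

lemma coneSet_union (s₁ s₂ : Finset (EuclideanSpace ℝ (Fin n))) :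
    coneSet (s₁ ∪ s₂) = coneSet s₁ + coneSet s₂ := by
  ext x
  constructor
  · rintro ⟨c, hc, rfl⟩
    rw [← Finset.union_sdiff_self_eq_union, Finset.sum_union Finset.disjoint_sdiff]
    refine Set.add_mem_add ⟨c, fun v hv => hc v (Finset.mem_union_left _ hv), rfl⟩
      (coneSet_mono Finset.sdiff_subset
        ⟨c, fun v hv => hc v ?_, rfl⟩)
    exact Finset.mem_union_right _ (Finset.mem_sdiff.mp hv).1
  · rintro ⟨a, ⟨c, hc, rfl⟩, b, ⟨d, hd, rfl⟩, rfl⟩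
    refine ⟨fun v => (if v ∈ s₁ then c v else 0) + (if v ∈ s₂ then d v else 0),
      fun v _ => ?_, ?_⟩
    · dsimp only
      refine add_nonneg ?_ ?_ <;> split_ifs with h
      · exact hc v h
      · exact le_rfl
      · exact hd v h
      · exact le_rfl
    · simp only [add_smul, Finset.sum_add_distrib]
      congr 1
      · rw [← Finset.sum_subset Finset.subset_union_left
          (fun v _ hv => by simp [hv])]
        exact Finset.sum_congr rfl fun v hv => by simp [hv]
      · rw [← Finset.sum_subset Finset.subset_union_right
          (fun v _ hv => by simp [hv])]
        exact Finset.sum_congr rfl fun v hv => by simp [hv]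

end Main

/-- If `σ₁, σ₂` are polyhedral closed convex cones whose intersection `τ = σ₁ ∩ σ₂` is a
face of each, then `τ∨ = σ₁∨ + σ₂∨` (Minkowski sum of the dual cones). -/
theorem dualCone_inter_eq_add {n : ℕ}
    (σ₁ σ₂ : Set (EuclideanSpace ℝ (Fin n)))
    (hp₁ : IsPolyhedralCone σ₁) (hp₂ : IsPolyhedralCone σ₂)
    (hface₁ : IsFaceOf (σ₁ ∩ σ₂) σ₁) (hface₂ : IsFaceOf (σ₁ ∩ σ₂) σ₂) :
    dualCone (σ₁ ∩ σ₂) = dualCone σ₁ + dualCone σ₂ := by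
  obtain ⟨s₁, rfl⟩ := hp₁
  obtain ⟨s₂, rfl⟩ := hp₂
  have hinter : {x : EuclideanSpace ℝ (Fin n) | ∀ m ∈ s₁, 0 ≤ ⟪m, x⟫}
      ∩ {x | ∀ m ∈ s₂, 0 ≤ ⟪m, x⟫} = {x | ∀ m ∈ s₁ ∪ s₂, 0 ≤ ⟪m, x⟫} := by
    ext x
    simp only [Set.mem_inter_iff, Set.mem_setOf_eq, Finset.mem_union, or_imp, forall_and]
  rw [hinter, dualCone_halfspaces, dualCone_halfspaces, dualCone_halfspaces, coneSet_union]
end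

section
/- Let k be a nonzero commutative ring and let Λ_≥ = k[ℝ_{≥0}] be the monoid algebra of the additive monoid of nonnegative reals. Let Λ_> be the ideal generated by the monoid elements t^a with a > 0. Then Λ_> is not a finitely generated ideal of Λ_≥. -/
open scoped NNReal

/-- Key vanishing lemma: if every generator vanishes on `[0, a]`, so does every element of
the span. -/
lemma novikov_aux {k : Type*} [CommRing k] (T : Set (AddMonoidAlgebra k ℝ≥0)) (a : ℝ≥0)
    (hT : ∀ g ∈ T, ∀ b ≤ a, g.coeff b = 0) :
    ∀ f ∈ Ideal.span T, ∀ b ≤ a, f.coeff b = 0 := by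
  intro f hf
  refine Submodule.span_induction (p := fun f _ => ∀ b ≤ a, f.coeff b = 0) ?_ ?_ ?_ ?_ hf
  · exact hT
  · intro b _; rfl
  · intro x y _ _ hx hy b hb
    rw [AddMonoidAlgebra.coeff_add, Finsupp.add_apply, hx b hb, hy b hb, add_zero]
  · intro c x _ hx b hb
    have : (c * x).coeff b = 0 := by
      classical
      rw [AddMonoidAlgebra.coeff_mul]
      apply Finset.sum_eq_zero
      intro p _
      apply Finset.sum_eq_zero
      intro q _
      simp only
      split_ifs with h
      · have hq : q ≤ a := le_trans (le_trans (le_add_self) h.le) hb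
        rw [hx q hq, mul_zero]
      · rfl
    simpa [smul_eq_mul] using this

/-- Over any nonzero commutative ring `k`, the maximal monomial ideal
`Λ_> = (t^a : a > 0)` of the polynomial Novikov ring `Λ_≥ = k[ℝ_{≥0}]` is not a finitely
generated ideal. -/
theorem novikov_maximal_ideal_not_fg (k : Type*) [CommRing k] [Nontrivial k] :
    ¬ (Ideal.span {f : AddMonoidAlgebra k ℝ≥0 |
        ∃ a : ℝ≥0, 0 < a ∧ f = AddMonoidAlgebra.single a 1}).FG := by
  rintro ⟨T, hT⟩
  classical
  set S := {f : AddMonoidAlgebra k ℝ≥0 |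
      ∃ a : ℝ≥0, 0 < a ∧ f = AddMonoidAlgebra.single a 1} with hS
  -- every element of the span vanishes at 0
  have hzero : ∀ f ∈ Ideal.span S, f.coeff 0 = 0 := by
    have : ∀ g ∈ S, ∀ b ≤ (0 : ℝ≥0), g.coeff b = 0 := by
      rintro g ⟨c, hc, rfl⟩ b hb
      have hb0 : b = 0 := le_antisymm hb bot_le
      subst hb0
      exact Finsupp.single_eq_of_ne (by exact fun h => hc.ne (h ▸ rfl))
    exact fun f hf => novikov_aux S 0 this f hf 0 le_rfl
  -- the union of supports of the generators
  set U : Finset ℝ≥0 := T.sup fun g => g.coeff.support with hU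
  set V : Finset ℝ≥0 := insert 1 U with hV
  have hVne : V.Nonempty := ⟨1, Finset.mem_insert_self _ _⟩
  set ε : ℝ≥0 := V.min' hVne with hε
  have hεpos : 0 < ε := by
    have hmem : ε ∈ V := Finset.min'_mem _ _
    rw [hV] at hmem
    rcases Finset.mem_insert.1 hmem with h | h
    · rw [h]; exact one_pos
    · rw [hU] at h
      rcases Finset.mem_sup.1 h with ⟨g, hg, hgs⟩
      have hg0 : g.coeff 0 = 0 := by
        apply hzero
        rw [← hT]
        exact Ideal.subset_span hg
      have : ε ≠ 0 := fun h0 => (Finsupp.mem_support_iff.1 hgs) (h0 ▸ hg0)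
      exact zero_lt_iff.2 this
  set a : ℝ≥0 := ε / 2 with ha
  have hapos : 0 < a := by positivity
  have haε : a < ε := NNReal.half_lt_self hεpos.ne'
  -- all generators in T vanish on [0, a]
  have hgen : ∀ g ∈ (T : Set (AddMonoidAlgebra k ℝ≥0)), ∀ b ≤ a, g.coeff b = 0 := by
    intro g hg b hb
    by_contra hne
    have hsupp : b ∈ g.coeff.support := Finsupp.mem_support_iff.2 hne
    have hbV : b ∈ V := Finset.mem_insert_of_mem (Finset.mem_sup.2 ⟨g, hg, hsupp⟩)
    have : ε ≤ b := Finset.min'_le _ _ hbV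
    exact absurd (lt_of_le_of_lt (this.trans hb) haε) (lt_irrefl ε)
  -- but `single a 1` is in the span
  have hmem : (AddMonoidAlgebra.single a 1 : AddMonoidAlgebra k ℝ≥0) ∈ Ideal.span S :=
    Ideal.subset_span ⟨a, hapos, rfl⟩
  rw [← hT] at hmem
  have := novikov_aux (T : Set (AddMonoidAlgebra k ℝ≥0)) a hgen _ hmem a le_rfl
  rw [AddMonoidAlgebra.coeff_single, Finsupp.single_eq_same] at this
  exact one_ne_zero this
end
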